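/- Let G be a non-trivial finite group, let (B,T) be a finite transitive partial transformation semigroup all of whose elements are partial maps of rank at most 1, let S = G ≀ (B,T) be the wreath product, and let π : G ≀ (B,T) → T be the wreath product projection. Then S is simple if T consists of total maps, and otherwise S is 0-simple. The maximal subgroup of the non-zero J-class of S is isomorphic to G; more precisely, if e ≠ 0 is an idempotent of S such that the image of the partial map π(e) is {b}, then the map ψ : G_e → G sending a matrix s to its (b,b)-entry is an isomorphism from the maximal subgroup G_e at e onto G. -/

import Mathlib

/-- Composition of partial maps, acting on the right: `b (f ⬝ g) = (b f) g`. -/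
def pmul {B : Type*} (f g : B → Option B) : B → Option B := fun b => (f b).bind g

/-- A row monomial `B × B` matrix over `G⁰` is modelled as a function sending each
row to its (column, entry) pair, if any.  `matToMap` is its underlying partial map. -/
def matToMap {B G : Type*} (M : B → Option (B × G)) : B → Option B :=
  fun b => (M b).map Prod.fst

/-- Multiplication of row monomial matrices over `G⁰`. -/
def mmul {B G : Type*} [Mul G] (M N : B → Option (B × G)) : B → Option (B × G) :=
  fun b => (M b).bind fun p => (N p.1).map fun q => (q.1, p.2 * q.2)

/-- The zero matrix. -/
def zeroMat (B G : Type*) : B → Option (B × G) := fun _ => none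

/-- The wreath product `G ≀ (B,T)`: all row monomial matrices over `G⁰` whose
underlying partial map lies in `T`. -/
def wreathSet (G : Type*) {B : Type*} (T : Set (B → Option B)) :
    Set (B → Option (B × G)) := {M | matToMap M ∈ T}

/-- Green's preorder `R` relative to the subsemigroup `S` of matrices. -/
def RLeW {B G : Type*} [Mul G] (S : Set (B → Option (B × G)))
    (u v : B → Option (B × G)) : Prop := u = v ∨ ∃ y ∈ S, u = mmul v y

/-- Green's preorder `L` relative to the subsemigroup `S` of matrices. -/
def LLeW {B G : Type*} [Mul G] (S : Set (B → Option (B × G)))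
    (u v : B → Option (B × G)) : Prop := u = v ∨ ∃ x ∈ S, u = mmul x v

/-- The `H`-class of `e` in the subsemigroup `S` of matrices (for an idempotent,
this is the maximal subgroup at `e`). -/
def HClassW {B G : Type*} [Mul G] (S : Set (B → Option (B × G)))
    (e : B → Option (B × G)) : Set (B → Option (B × G)) :=
  {s | s ∈ S ∧ RLeW S s e ∧ RLeW S e s ∧ LLeW S s e ∧ LLeW S e s}

/-- Let `G` be a non-trivial finite group and `(B,T)` a finite transitive partial
transformation semigroup of rank at most `1` maps, and let `S = G ≀ (B,T)`.
Then `S` is simple if `T` consists of total maps and `0`-simple otherwise, and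
for every non-zero idempotent `e` whose underlying partial map has image `{b}`,
the map sending an element of the maximal subgroup at `e` to its `(b,b)`-entry
is an isomorphism onto `G`. -/
lemma mmul_assoc {B G : Type*} [Semigroup G] (a b c : B → Option (B × G)) :
    mmul (mmul a b) c = mmul a (mmul b c) := by
  funext x
  simp only [mmul]
  cases a x with
  | none => rfl
  | some p =>
    simp only [Option.bind_some]
    cases b p.1 with
    | none => rfl
    | some q =>
      simp only [Option.map_some, Option.bind_some, Option.map_map]
      cases c q.1 <;> simp [mul_assoc, Function.comp]

/-- Key reachability lemma: any nonzero element generates everything. -/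
lemma wreath_reach {B G : Type*} [Group G]
    (T : Set (B → Option B))
    (hTmul : ∀ f ∈ T, ∀ g ∈ T, pmul f g ∈ T)
    (hTtrans : ∀ b b' : B, ∃ t ∈ T, t b = some b')
    (hTrank : ∀ t ∈ T, ∀ b b' c c' : B, t b = some c → t b' = some c' → c = c')
    {a m : B → Option (B × G)} (ha : a ∈ wreathSet G T) (hm : m ∈ wreathSet G T)
    {b₀ c : B} {g₀ : G} (hab : a b₀ = some (c, g₀))
    {b₁ d : B} {h₁ : G} (hmb : m b₁ = some (d, h₁)) :
    ∃ x ∈ wreathSet G T, ∃ y ∈ wreathSet G T, m = mmul (mmul x a) y := by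
  obtain ⟨u, huT, hu⟩ := hTtrans d b₀
  obtain ⟨v, hvT, hv⟩ := hTtrans c d
  refine ⟨fun b => (m b).bind fun p => (u p.1).map fun b' => (b', p.2 * g₀⁻¹), ?_,
          fun b' => (v b').map fun d' => (d', (1 : G)), ?_, ?_⟩
  · show matToMap _ ∈ T
    have : matToMap (fun b => (m b).bind fun p => (u p.1).map fun b' => (b', p.2 * g₀⁻¹))
        = pmul (matToMap m) u := by
      funext b
      simp only [matToMap, pmul]
      cases m b with
      | none => rfl
      | some p =>
        simp only [Option.bind_some, Option.map_some, Option.map_map]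
        cases u p.1 <;> simp [Function.comp]
    rw [this]
    exact hTmul _ hm _ huT
  · show matToMap _ ∈ T
    have : matToMap (fun b' => (v b').map fun d' => (d', (1 : G))) = v := by
      funext b
      simp only [matToMap, Option.map_map]
      cases v b <;> simp [Function.comp]
    rw [this]
    exact hvT
  · funext b
    simp only [mmul]
    cases hmb' : m b with
    | none => rfl
    | some p =>
      have hp1 : p.1 = d := by
        refine hTrank (matToMap m) hm b b₁ p.1 d ?_ ?_ <;>
          simp [matToMap, hmb', hmb]
      simp only [Option.bind_some, hp1, hu, Option.map_some, hab, hv, Option.bind_some]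
      simp [mul_assoc, ← hp1]
/-- Auxiliary: surjectivity of the entry map on the H-class. -/
lemma wreath_surj_aux {B G : Type*} [Group G] (T : Set (B → Option B))
    (e : B → Option (B × G)) (heS : e ∈ wreathSet G T) (b : B)
    (hcol : ∀ b₀ : B, ∀ p : B × G, e b₀ = some p → p.1 = b)
    (heb : e b = some (b, 1)) (g : G) :
    ∃ s ∈ HClassW (wreathSet G T) e, s b = some (b, g) := by
  set s : B → Option (B × G) := fun b₀ => (e b₀).map fun p => (p.1, p.2 * g) with hsdef
  set y : B → Option (B × G) := fun b₀ => (e b₀).map fun p => (p.1, p.2 * g⁻¹) with hydef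
  have hmapeq : ∀ (k : G),
      matToMap (fun b₀ => (e b₀).map fun p => (p.1, p.2 * k)) = matToMap e := by
    intro k; funext b₂
    simp only [matToMap, Option.map_map]
    cases e b₂ <;> simp [Function.comp]
  have hsS : s ∈ wreathSet G T := by
    show matToMap s ∈ T; rw [hsdef, hmapeq]; exact heS
  have hyS : y ∈ wreathSet G T := by
    show matToMap y ∈ T; rw [hydef, hmapeq]; exact heS
  have hsb : s b = some (b, g) := by simp [hsdef, heb]
  have hyb : y b = some (b, g⁻¹) := by simp [hydef, heb]
  have h1 : s = mmul e s := by
    funext b₂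
    simp only [mmul]
    cases hep : e b₂ with
    | none => simp [hsdef, hep]
    | some p =>
      simp only [Option.bind_some, hcol b₂ p hep, hsb, Option.map_some]
      simp [hsdef, hep, hcol b₂ p hep]
  have h2 : e = mmul s y := by
    funext b₂
    simp only [mmul]
    cases hep : e b₂ with
    | none => simp [hsdef, hep]
    | some p =>
      have hsb₂ : s b₂ = some (b, p.2 * g) := by
        simp [hsdef, hep, hcol b₂ p hep]
      simp only [hsb₂, Option.bind_some, hyb, Option.map_some, hep,
        Option.some.injEq, Prod.ext_iff]
      exact ⟨hcol b₂ p hep, by group⟩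
  have h3 : s = mmul s e := by
    funext b₂
    simp only [mmul]
    cases hep : e b₂ with
    | none => simp [hsdef, hep]
    | some p =>
      have hsb₂ : s b₂ = some (b, p.2 * g) := by
        simp [hsdef, hep, hcol b₂ p hep]
      simp [hsb₂, heb]
  have h4 : e = mmul y s := by
    funext b₂
    simp only [mmul]
    cases hep : e b₂ with
    | none => simp [hydef, hep]
    | some p =>
      have hyb₂ : y b₂ = some (b, p.2 * g⁻¹) := by
        simp [hydef, hep, hcol b₂ p hep]
      simp only [hyb₂, Option.bind_some, hsb, Option.map_some, hep,
        Option.some.injEq, Prod.ext_iff]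
      exact ⟨hcol b₂ p hep, by group⟩
  exact ⟨s, ⟨hsS, Or.inr ⟨s, hsS, h1⟩, Or.inr ⟨y, hyS, h2⟩,
    Or.inr ⟨s, hsS, h3⟩, Or.inr ⟨y, hyS, h4⟩⟩, hsb⟩
theorem wreath_simple_and_maximal_subgroup {B G : Type*} [Fintype B] [Nonempty B]
    [Group G] [Fintype G] [Nontrivial G]
    (T : Set (B → Option B)) (hTne : T.Nonempty)
    (hTmul : ∀ f ∈ T, ∀ g ∈ T, pmul f g ∈ T)
    (hTtrans : ∀ b b' : B, ∃ t ∈ T, t b = some b')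
    (hTrank : ∀ t ∈ T, ∀ b b' c c' : B, t b = some c → t b' = some c' → c = c') :
    -- if `T` consists of total maps then `S` is simple
    ((∀ t ∈ T, ∀ b : B, (t b).isSome) →
      ∀ I : Set (B → Option (B × G)), I ⊆ wreathSet G T → I.Nonempty →
        (∀ a ∈ I, ∀ s ∈ wreathSet G T, mmul a s ∈ I ∧ mmul s a ∈ I) →
        I = wreathSet G T) ∧
    -- otherwise `S` is `0`-simple
    ((¬ ∀ t ∈ T, ∀ b : B, (t b).isSome) →
      zeroMat B G ∈ wreathSet G T ∧
      (∃ a ∈ wreathSet G T, ∃ a' ∈ wreathSet G T, mmul a a' ≠ zeroMat B G) ∧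
      (∀ I : Set (B → Option (B × G)), I ⊆ wreathSet G T → I.Nonempty →
        (∀ a ∈ I, ∀ s ∈ wreathSet G T, mmul a s ∈ I ∧ mmul s a ∈ I) →
        I = {zeroMat B G} ∨ I = wreathSet G T)) ∧
    -- the maximal subgroup at a non-zero idempotent `e` with image of `π(e)`
    -- equal to `{b}` is isomorphic to `G` via the `(b,b)`-entry map `ψ`
    (∀ e ∈ wreathSet G T, e ≠ zeroMat B G → mmul e e = e → ∀ b : B,
      (∀ b₀ : B, ∀ p : B × G, e b₀ = some p → p.1 = b) →
      -- `ψ` is well defined: every element of `G_e` has a `(b,b)`-entry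
      (∀ s ∈ HClassW (wreathSet G T) e, ∃ g : G, s b = some (b, g)) ∧
      -- `ψ` is multiplicative
      (∀ s ∈ HClassW (wreathSet G T) e, ∀ t' ∈ HClassW (wreathSet G T) e,
        ∀ gs gt : G, s b = some (b, gs) → t' b = some (b, gt) →
          mmul s t' b = some (b, gs * gt)) ∧
      -- `ψ` is injective
      (∀ s ∈ HClassW (wreathSet G T) e, ∀ t' ∈ HClassW (wreathSet G T) e,
        ∀ g : G, s b = some (b, g) → t' b = some (b, g) → s = t') ∧
      -- `ψ` is surjective
      (∀ g : G, ∃ s ∈ HClassW (wreathSet G T) e, s b = some (b, g))) := by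
  have hentry : ∀ w : B → Option (B × G), w ≠ zeroMat B G →
      ∃ b₂ p, w b₂ = some p := by
    intro w hw
    by_contra hno
    push_neg at hno
    apply hw
    funext b'
    cases h : w b' with
    | none => rfl
    | some p => exact absurd h (hno b' p)
  refine ⟨?_, ?_, ?_⟩
  · -- simple case
    intro htot I hIS hIne hIdeal
    obtain ⟨a, haI⟩ := hIne
    have haS := hIS haI
    apply Set.Subset.antisymm hIS
    intro m hmS
    have htotE : ∀ w ∈ wreathSet G T, ∃ (b₂ : B) (p : B × G), w b₂ = some p := by
      intro w hw
      have b := Classical.arbitrary B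
      have h := htot _ hw b
      simp only [matToMap, Option.isSome_map] at h
      obtain ⟨p, hp⟩ := Option.isSome_iff_exists.mp h
      exact ⟨b, p, hp⟩
    obtain ⟨b₀, ⟨c, g₀⟩, hab⟩ := htotE a haS
    obtain ⟨b₁, ⟨d, h₁⟩, hmb⟩ := htotE m hmS
    obtain ⟨x, hxS, y, hyS, hxy⟩ :=
      wreath_reach T hTmul hTtrans hTrank haS hmS hab hmb
    rw [hxy]
    exact (hIdeal _ (hIdeal a haI x hxS).2 y hyS).1
  · -- 0-simple case
    intro hnt
    push_neg at hnt
    obtain ⟨t, htT, b₂, htb⟩ := hnt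
    have htb' : t b₂ = none := Option.not_isSome_iff_eq_none.mp htb
    obtain ⟨u, huT, hu⟩ := hTtrans b₂ b₂
    have hzero : (fun _ => none : B → Option B) ∈ T := by
      have h : pmul u t = fun _ => none := by
        funext x
        simp only [pmul]
        cases hux : u x with
        | none => rfl
        | some c =>
          have : c = b₂ := hTrank u huT x b₂ c b₂ hux hu
          simp [this, htb']
      rw [← h]
      exact hTmul u huT t htT
    have hz0S : zeroMat B G ∈ wreathSet G T := by
      show matToMap (zeroMat B G) ∈ T
      have : matToMap (zeroMat B G) = fun _ => none := rfl
      rw [this]; exact hzero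
    refine ⟨hz0S, ?_, ?_⟩
    · have b := Classical.arbitrary B
      obtain ⟨t', ht'T, ht'⟩ := hTtrans b b
      refine ⟨fun b' => (t' b').map fun c => (c, (1 : G)), ?_,
              fun b' => (t' b').map fun c => (c, (1 : G)), ?_, ?_⟩
      · show matToMap _ ∈ T
        have : matToMap (fun b' => (t' b').map fun c => (c, (1 : G))) = t' := by
          funext b''
          simp only [matToMap, Option.map_map]
          cases t' b'' <;> simp [Function.comp]
        rw [this]; exact ht'T
      · show matToMap _ ∈ T
        have : matToMap (fun b' => (t' b').map fun c => (c, (1 : G))) = t' := by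
          funext b''
          simp only [matToMap, Option.map_map]
          cases t' b'' <;> simp [Function.comp]
        rw [this]; exact ht'T
      · intro hcontra
        have h := congrFun hcontra b
        simp [mmul, ht', zeroMat] at h
    · intro I hIS hIne hIdeal
      by_cases hz : ∀ a ∈ I, a = zeroMat B G
      · left
        apply Set.Subset.antisymm
        · intro a haI; exact hz a haI
        · intro z hzz
          obtain ⟨a, haI⟩ := hIne
          rw [Set.mem_singleton_iff] at hzz
          rw [hzz, ← hz a haI]
          exact haI
      · right
        push_neg at hz
        obtain ⟨a, haI, hane⟩ := hz
        have haS := hIS haI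
        obtain ⟨b₀, ⟨c, g₀⟩, hab⟩ := hentry a hane
        apply Set.Subset.antisymm hIS
        intro m hmS
        by_cases hmz : m = zeroMat B G
        · rw [hmz]
          have h := (hIdeal a haI (zeroMat B G) hz0S).2
          have hzz : mmul (zeroMat B G) a = zeroMat B G := rfl
          rwa [hzz] at h
        · obtain ⟨b₁, ⟨d, h₁⟩, hmb⟩ := hentry m hmz
          obtain ⟨x, hxS, y, hyS, hxy⟩ :=
            wreath_reach T hTmul hTtrans hTrank haS hmS hab hmb
          rw [hxy]
          exact (hIdeal _ (hIdeal a haI x hxS).2 y hyS).1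
  · -- maximal subgroup
    intro e heS hene hee b hcol
    have heb : e b = some (b, 1) := by
      obtain ⟨b₂, p, hp⟩ := hentry e hene
      have h := congrFun hee b₂
      simp only [mmul, hp, Option.bind_some, hcol b₂ p hp] at h
      cases hq : e b with
      | none => rw [hq] at h; simp [hp] at h
      | some q =>
        rw [hq] at h
        simp only [Option.map_some, hp, Option.some.injEq] at h
        have hq1 : q.1 = b := hcol b q hq
        have hq2 : q.2 = 1 := by
          have h2 := congrArg Prod.snd h
          simp only at h2
          exact mul_left_cancel (by rw [mul_one]; exact h2)
        rw [show q = (b, 1) from Prod.ext hq1 hq2]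
    have h_es : ∀ s, RLeW (wreathSet G T) s e → mmul e s = s := by
      intro s hs
      unfold RLeW at hs
      rcases hs with rfl | ⟨y, hyS, rfl⟩
      · exact hee
      · rw [← mmul_assoc, hee]
    have h_se : ∀ s, LLeW (wreathSet G T) s e → mmul s e = s := by
      intro s hs
      unfold LLeW at hs
      rcases hs with rfl | ⟨x, hxS, rfl⟩
      · exact hee
      · rw [mmul_assoc, hee]
    refine ⟨?_, ?_, ?_, ?_⟩
    · -- well defined
      intro s hs
      obtain ⟨hsS, hsRe, heRs, hsLe, heLs⟩ := hs
      have hdef : ∃ p, s b = some p := by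
        unfold RLeW at heRs
        rcases heRs with h | ⟨y, hyS, hy⟩
        · exact ⟨(b, 1), by rw [← h]; exact heb⟩
        · have h := congrFun hy b
          rw [heb] at h
          simp only [mmul] at h
          cases hsb : s b with
          | none => rw [hsb] at h; simp at h
          | some p => exact ⟨p, rfl⟩
      obtain ⟨p, hsb⟩ := hdef
      have hse := congrFun (h_se s hsLe) b
      simp only [mmul, hsb, Option.bind_some] at hse
      cases hep : e p.1 with
      | none => rw [hep] at hse; simp at hse
      | some q =>
        rw [hep] at hse
        simp only [Option.map_some] at hse
        refine ⟨p.2 * q.2, ?_⟩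
        rw [hsb, ← hse, hcol p.1 q hep]
    · -- multiplicative
      intro s _ t' _ gs gt hsb htb
      simp [mmul, hsb, htb]
    · -- injective
      intro s hs t' ht' g hsb htb
      obtain ⟨hsS, hsRe, _, _, _⟩ := hs
      obtain ⟨htS, htRe, _, _, _⟩ := ht'
      have h1 := h_es s hsRe
      have h2 := h_es t' htRe
      funext b₂
      rw [← congrFun h1 b₂, ← congrFun h2 b₂]
      simp only [mmul]
      cases hep : e b₂ with
      | none => rfl
      | some p =>
        simp only [Option.bind_some, hcol b₂ p hep, hsb, htb]
    · -- surjective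
      intro g
      exact wreath_surj_aux T e heS b hcol heb g
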